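/- Let S be a standard graded Artinian algebra over a field k, and let (F_j, f_j)_{j∈ℤ} be a complex of finitely generated graded free S-modules (with differentials f_j : F_j → F_{j−1} satisfying f_{j−1} ∘ f_j = 0), where each f_j is homogeneous of degree 0 and minimal, meaning im(f_j) ⊆ S₊ · F_{j−1}. Assume the complex is exact and that the dual complex obtained by applying Hom_S(−, S) is also exact (i.e. the complex is totally acyclic). Then for every integer N, the degree-N component [F_j]_N is nonzero for only finitely many j ∈ ℤ, and Σ_{j∈ℤ} (−1)^j dim_k [F_j]_N = 0. -/

import Mathlib

set_option linter.unusedSectionVars false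

open DirectSum

namespace Stmt5

variable {k S : Type*} [Field k] [CommRing S] [Algebra k S]
variable (𝒜 : ℕ → Submodule k S) [GradedAlgebra 𝒜]

/-- The irrelevant ideal. -/
abbrev pid : Ideal S := Ideal.span (⋃ i : ℕ, ⋃ _ : 1 ≤ i, ((𝒜 i : Set S)))

/-- Integer-indexed graded piece of `S`. -/
def AZ (z : ℤ) : Submodule k S := if 0 ≤ z then 𝒜 z.toNat else ⊥

/-- Integer-indexed projection, as a `k`-linear map. -/
noncomputable def projZ (z : ℤ) : S →ₗ[k] S :=
  if 0 ≤ z then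
    ((𝒜 z.toNat).subtype ∘ₗ (DirectSum.component k ℕ (fun i => 𝒜 i) z.toNat) ∘ₗ
      (DirectSum.decomposeAlgEquiv 𝒜).toLinearMap)
  else 0

lemma projZ_apply_nonneg {z : ℤ} (hz : 0 ≤ z) (w : S) :
    projZ 𝒜 z w = (decompose 𝒜 w z.toNat : S) := by
  simp [projZ, hz]
  rfl

lemma projZ_apply_neg {z : ℤ} (hz : z < 0) (w : S) : projZ 𝒜 z w = 0 := by
  simp [projZ, not_le.mpr hz]

lemma projZ_mem (z : ℤ) (w : S) : projZ 𝒜 z w ∈ AZ 𝒜 z := by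
  by_cases hz : 0 ≤ z
  · rw [projZ_apply_nonneg 𝒜 hz, AZ, if_pos hz]
    exact (decompose 𝒜 w z.toNat).2
  · rw [projZ_apply_neg 𝒜 (not_le.mp hz), AZ, if_neg hz]
    exact Submodule.zero_mem _

lemma projZ_of_mem {z : ℤ} {w : S} (hw : w ∈ AZ 𝒜 z) : projZ 𝒜 z w = w := by
  by_cases hz : 0 ≤ z
  · rw [AZ, if_pos hz] at hw
    rw [projZ_apply_nonneg 𝒜 hz, decompose_of_mem_same 𝒜 hw]
  · rw [AZ, if_neg hz] at hw
    simp only [Submodule.mem_bot] at hw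
    rw [projZ_apply_neg 𝒜 (not_le.mp hz), hw]

/-- projection of a product with a homogeneous left factor. -/
lemma projZ_mul_left {i : ℕ} {s : S} (hs : s ∈ 𝒜 i) (w : S) (z : ℤ) :
    projZ 𝒜 z (s * w) = s * projZ 𝒜 (z - i) w := by
  by_cases hz : 0 ≤ z
  · rw [projZ_apply_nonneg 𝒜 hz]
    by_cases hiz : (i : ℤ) ≤ z
    · have h1 : 0 ≤ z - i := by omega
      have h2 : i ≤ z.toNat := by omega
      rw [DirectSum.coe_decompose_mul_of_left_mem_of_le 𝒜 hs h2,
        projZ_apply_nonneg 𝒜 h1, show (z - i).toNat = z.toNat - i by omega]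
    · have h2 : ¬ i ≤ z.toNat := by omega
      rw [DirectSum.coe_decompose_mul_of_left_mem_of_not_le 𝒜 hs h2,
        projZ_apply_neg 𝒜 (by omega), mul_zero]
  · rw [projZ_apply_neg 𝒜 (not_le.mp hz), projZ_apply_neg 𝒜 (by omega), mul_zero]

/-- degree-zero projection kills the irrelevant ideal. -/
lemma proj0_pid {s : S} (hs : s ∈ pid 𝒜) : projZ 𝒜 0 s = 0 := by
  refine Submodule.span_induction ?_ ?_ ?_ ?_ hs
  · intro x hx
    simp only [Set.mem_iUnion] at hx
    obtain ⟨i, hi, hxi⟩ := hx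
    rw [projZ_apply_nonneg 𝒜 le_rfl]
    exact decompose_of_mem_ne 𝒜 hxi (by omega)
  · simp
  · intro x y _ _ hx hy
    rw [map_add, hx, hy, add_zero]
  · intro c x _ hx
    -- c • x = c * x ; decompose c and use projZ_mul_left
    have hx' : ∀ i : ℕ, projZ 𝒜 (0 - (i:ℤ)) x = 0 := by
      intro i
      rcases Nat.eq_zero_or_pos i with h | h
      · simpa [h] using hx
      · exact projZ_apply_neg 𝒜 (by omega) x
    classical
    have hc : c = ∑ i ∈ (decompose 𝒜 c).support, ((decompose 𝒜 c i : S)) :=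
      (DirectSum.sum_support_decompose 𝒜 c).symm
    rw [smul_eq_mul, hc, Finset.sum_mul, map_sum]
    refine Finset.sum_eq_zero fun i _ => ?_
    rw [projZ_mul_left 𝒜 (decompose 𝒜 c i).2, hx', mul_zero]

end Stmt5

namespace Stmt5

variable {k S : Type*} [Field k] [CommRing S] [Algebra k S]
variable (𝒜 : ℕ → Submodule k S) [GradedAlgebra 𝒜]
variable {M : Type*} [AddCommGroup M] [Module S M] [Module k M] [IsScalarTower k S M]
variable (ℳ : ℤ → Submodule k M) [DirectSum.Decomposition ℳ]

/-- compatibility of the grading with scalars -/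
def Compat : Prop :=
  ∀ (i : ℕ) (n : ℤ) (s : S) (x : M), s ∈ 𝒜 i → x ∈ ℳ n → s • x ∈ ℳ (n + i)

variable {𝒜 ℳ}

lemma dec_smul (hsm : Compat 𝒜 ℳ) {i : ℕ} {s : S} (hs : s ∈ 𝒜 i) (x : M) (m : ℤ) :
    (decompose ℳ (s • x) m : M) = s • (decompose ℳ x (m - i) : M) := by
  induction x using DirectSum.Decomposition.inductionOn ℳ with
  | zero => simp
  | @homogeneous n y =>
    have hy : (y : M) ∈ ℳ n := y.2
    have hsy : s • (y : M) ∈ ℳ (n + i) := hsm i n s y hs hy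
    by_cases hm : m = n + i
    · subst hm
      rw [decompose_of_mem_same ℳ hsy, show n + (i:ℤ) - i = n by ring,
        decompose_of_mem_same ℳ hy]
    · rw [decompose_of_mem_ne ℳ hsy (Ne.symm hm),
        decompose_of_mem_ne ℳ hy (by omega), smul_zero]
  | add y z hy hz =>
    rw [smul_add, DirectSum.decompose_add, DirectSum.decompose_add, DirectSum.add_apply,
      DirectSum.add_apply, Submodule.coe_add, Submodule.coe_add, hy, hz, smul_add]

/-- Lowest-degree vanishing: an element of `pid • ⊤` has zero component in any degree
`n` such that all lower degrees of `ℳ` vanish. -/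
lemma low (hsm : Compat 𝒜 ℳ) {n : ℤ} (hlow : ∀ m : ℤ, m < n → ℳ m = ⊥)
    {x : M} (hx : x ∈ (pid 𝒜) • (⊤ : Submodule S M)) :
    (decompose ℳ x n : M) = 0 := by
  classical
  refine Submodule.smul_induction_on hx ?_ ?_
  · intro s hs y _
    have hrw : s • y = ∑ i ∈ (decompose 𝒜 s).support, ((decompose 𝒜 s i : S)) • y := by
      conv_lhs => rw [← DirectSum.sum_support_decompose 𝒜 s]
      rw [Finset.sum_smul]
    rw [hrw, DirectSum.decompose_sum, DFinsupp.finset_sum_apply, AddSubmonoidClass.coe_finset_sum]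
    refine Finset.sum_eq_zero fun i _ => ?_
    rw [dec_smul hsm (decompose 𝒜 s i).2]
    rcases Nat.eq_zero_or_pos i with h0 | h0
    · subst h0
      have : (decompose 𝒜 s 0 : S) = 0 := by
        have := proj0_pid 𝒜 hs
        rwa [projZ_apply_nonneg 𝒜 le_rfl] at this
      rw [this, zero_smul]
    · have : ℳ (n - i) = ⊥ := hlow _ (by omega)
      have hz : (decompose ℳ y (n - (i:ℤ)) : M) = 0 := by
        have hmem := (decompose ℳ y (n - (i:ℤ))).2
        exact (Submodule.eq_bot_iff _).mp this _ hmem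
      rw [hz, smul_zero]
  · intro y z hy hz
    rw [DirectSum.decompose_add, DirectSum.add_apply, Submodule.coe_add, hy, hz, add_zero]

end Stmt5

namespace Stmt5

variable {k S : Type*} [Field k] [CommRing S] [Algebra k S]
variable {𝒜 : ℕ → Submodule k S} [GradedAlgebra 𝒜]
variable {M : Type*} [AddCommGroup M] [Module S M] [Module k M] [IsScalarTower k S M]
variable {ℳ : ℤ → Submodule k M} [DirectSum.Decomposition ℳ]

variable (𝒜 ℳ) in
/-- homogeneous functionals of degree `d` -/
def IsHomog (g : M →ₗ[S] S) (d : ℤ) : Prop :=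
  ∀ (e : ℤ) (x : M), x ∈ ℳ e → g x ∈ AZ 𝒜 (d + e)

variable (𝒜 ℳ) in
/-- `k`-linear degree-`d` piece of a functional -/
noncomputable def piecek (d : ℤ) (φ : M →ₗ[S] S) : M →ₗ[k] S :=
  (DirectSum.toModule k ℤ S fun e =>
      (projZ 𝒜 (d + e)) ∘ₗ ((φ.restrictScalars k) ∘ₗ (ℳ e).subtype)) ∘ₗ
    (DirectSum.decomposeLinearEquiv ℳ).toLinearMap

lemma piecek_of_mem (d : ℤ) (φ : M →ₗ[S] S) {e : ℤ} {x : M} (hx : x ∈ ℳ e) :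
    piecek 𝒜 ℳ d φ x = projZ 𝒜 (d + e) (φ x) := by
  unfold piecek
  simp only [LinearMap.coe_comp, Function.comp_apply, LinearEquiv.coe_coe,
    decomposeLinearEquiv_apply]
  rw [DirectSum.decompose_of_mem ℳ hx, ← DirectSum.lof_eq_of k, DirectSum.toModule_lof]
  rfl

lemma piecek_smul (hsm : Compat 𝒜 ℳ) (d : ℤ) (φ : M →ₗ[S] S) (s : S) (x : M) :
    piecek 𝒜 ℳ d φ (s • x) = s • piecek 𝒜 ℳ d φ x := by
  classical
  induction x using DirectSum.Decomposition.inductionOn ℳ with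
  | zero => rw [smul_zero, map_zero, smul_zero]
  | @homogeneous e y =>
    have key : ∀ (i : ℕ) (si : S), si ∈ 𝒜 i →
        piecek 𝒜 ℳ d φ (si • (y : M)) = si • piecek 𝒜 ℳ d φ (y : M) := by
      intro i si hsi
      have h1 : si • (y : M) ∈ ℳ (e + i) := hsm i e si y hsi y.2
      rw [piecek_of_mem d φ h1, piecek_of_mem d φ y.2, map_smul, smul_eq_mul,
        projZ_mul_left 𝒜 hsi, show d + (e + (i:ℤ)) - i = d + e by ring, smul_eq_mul]
    have hs' : s = ∑ i ∈ (decompose 𝒜 s).support, ((decompose 𝒜 s i : S)) :=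
      (DirectSum.sum_support_decompose 𝒜 s).symm
    rw [hs', Finset.sum_smul, map_sum, Finset.sum_smul]
    exact Finset.sum_congr rfl fun i _ => key i _ (decompose 𝒜 s i).2
  | add y z hy hz => rw [smul_add, map_add, hy, hz, map_add, smul_add]

/-- The degree-`d` piece of a functional, as an `S`-linear map. -/
noncomputable def piece (hsm : Compat 𝒜 ℳ) (d : ℤ) (φ : M →ₗ[S] S) : M →ₗ[S] S :=
  { toFun := piecek 𝒜 ℳ d φ
    map_add' := map_add _
    map_smul' := fun s x => piecek_smul hsm d φ s x }

lemma piece_of_mem (hsm : Compat 𝒜 ℳ) (d : ℤ) (φ : M →ₗ[S] S) {e : ℤ} {x : M}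
    (hx : x ∈ ℳ e) : piece hsm d φ x = projZ 𝒜 (d + e) (φ x) :=
  piecek_of_mem d φ hx

lemma piece_isHomog (hsm : Compat 𝒜 ℳ) (d : ℤ) (φ : M →ₗ[S] S) :
    IsHomog 𝒜 ℳ (piece hsm d φ) d := by
  intro e x hx
  rw [piece_of_mem hsm d φ hx]
  exact projZ_mem 𝒜 _ _

lemma ext_homog {g : M →ₗ[S] S} (h : ∀ (e : ℤ) (x : M), x ∈ ℳ e → g x = 0) : g = 0 := by
  classical
  ext x
  conv_lhs => rw [← DirectSum.sum_support_decompose ℳ x]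
  rw [map_sum]
  exact Finset.sum_eq_zero fun e _ => h e _ (decompose ℳ x e).2

lemma homog_eval {g : M →ₗ[S] S} {d : ℤ} (hg : IsHomog 𝒜 ℳ g d) {e : ℤ} {x : M}
    (hx : x ∈ ℳ e) : g x = projZ 𝒜 (d + e) (g x) :=
  (projZ_of_mem 𝒜 (hg e x hx)).symm

lemma lowDual (hsm : Compat 𝒜 ℳ) {d' : ℤ}
    (hQ : ∀ d'' < d', ∀ g : M →ₗ[S] S, IsHomog 𝒜 ℳ g d'' → g = 0)
    {ψ : M →ₗ[S] S} (hmem : ψ ∈ (pid 𝒜) • (⊤ : Submodule S (M →ₗ[S] S)))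
    (hh : IsHomog 𝒜 ℳ ψ d') : ψ = 0 := by
  classical
  have C : ∀ ψ₀ ∈ (pid 𝒜) • (⊤ : Submodule S (M →ₗ[S] S)),
      ∀ (e : ℤ) (x : M), x ∈ ℳ e → projZ 𝒜 (d' + e) (ψ₀ x) = 0 := by
    intro ψ₀ h₀
    refine Submodule.smul_induction_on h₀ ?_ ?_
    · intro s hs χ _ e x hx
      have hrw : (s • χ) x = s * χ x := rfl
      rw [hrw]
      have hs' : s = ∑ i ∈ (decompose 𝒜 s).support, ((decompose 𝒜 s i : S)) :=
        (DirectSum.sum_support_decompose 𝒜 s).symm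
      rw [hs', Finset.sum_mul, map_sum]
      refine Finset.sum_eq_zero fun i _ => ?_
      rw [projZ_mul_left 𝒜 (decompose 𝒜 s i).2]
      rcases Nat.eq_zero_or_pos i with h0 | h0
      · subst h0
        have hz : (decompose 𝒜 s 0 : S) = 0 := by
          have := proj0_pid 𝒜 hs
          rwa [projZ_apply_nonneg 𝒜 le_rfl] at this
        rw [hz, zero_mul]
      · have hp : piece hsm (d' - i) χ = 0 :=
          hQ _ (by omega) _ (piece_isHomog hsm _ _)
        have hpx : piece hsm (d' - (i:ℤ)) χ x = 0 := by rw [hp]; rfl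
        rw [piece_of_mem hsm _ _ hx] at hpx
        rw [show d' + e - (i:ℤ) = d' - i + e by ring, hpx, mul_zero]
    · intro g h hg hh' e x hx
      rw [LinearMap.add_apply, map_add, hg e x hx, hh' e x hx, add_zero]
  refine ext_homog (ℳ := ℳ) fun e x hx => ?_
  rw [homog_eval hh hx, C ψ hmem e x hx]

lemma mem_smul_of_values [Module.Free S M] [Module.Finite S M] (ψ : M →ₗ[S] S)
    (h : ∀ x, ψ x ∈ pid 𝒜) : ψ ∈ (pid 𝒜) • (⊤ : Submodule S (M →ₗ[S] S)) := by
  classical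
  let b := Module.Free.chooseBasis S M
  have hψ : ψ = ∑ i, ψ (b i) • (b.coord i) := by
    ext x
    rw [LinearMap.sum_apply]
    conv_lhs => rw [← b.sum_repr x]
    rw [map_sum]
    refine Finset.sum_congr rfl fun i _ => ?_
    rw [map_smul, LinearMap.smul_apply, Module.Basis.coord_apply, smul_eq_mul, smul_eq_mul, mul_comm]
  rw [hψ]
  exact Submodule.sum_mem _ fun i _ => Submodule.smul_mem_smul (h _) trivial

lemma exists_homog_ne (hsm : Compat 𝒜 ℳ) [Module.Free S M] {e : ℤ} {x : M}
    (hx : x ∈ ℳ e) (hx0 : x ≠ 0) :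
    ∃ (d : ℤ) (g : M →ₗ[S] S), IsHomog 𝒜 ℳ g d ∧ g x ≠ 0 ∧ 0 ≤ d + e := by
  classical
  obtain ⟨φ, hφ⟩ : ∃ φ : M →ₗ[S] S, φ x ≠ 0 := by
    let b := Module.Free.chooseBasis S M
    have hr : b.repr x ≠ 0 := fun h => hx0 (by simpa [map_zero] using congrArg b.repr.symm h)
    obtain ⟨i, hi⟩ := Finsupp.ne_iff.mp hr
    exact ⟨b.coord i, by simpa [Module.Basis.coord_apply] using hi⟩
  have hcex : ∃ c : ℕ, (decompose 𝒜 (φ x) c : S) ≠ 0 := by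
    by_contra h
    push_neg at h
    apply hφ
    conv_lhs => rw [← DirectSum.sum_support_decompose 𝒜 (φ x)]
    exact Finset.sum_eq_zero fun c _ => h c
  obtain ⟨c, hc⟩ := hcex
  refine ⟨(c : ℤ) - e, piece hsm ((c : ℤ) - e) φ, piece_isHomog hsm _ _, ?_, by omega⟩
  rw [piece_of_mem hsm _ _ hx, show (c:ℤ) - e + e = c by ring,
    projZ_apply_nonneg 𝒜 (by omega)]
  simpa using hc

lemma homog_lb {g : M →ₗ[S] S} {d : ℤ} (hg : IsHomog 𝒜 ℳ g d) (hg0 : g ≠ 0) :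
    ∃ e : ℤ, ℳ e ≠ ⊥ ∧ 0 ≤ d + e := by
  have hex : ∃ (e : ℤ) (x : M), x ∈ ℳ e ∧ g x ≠ 0 := by
    by_contra h
    push_neg at h
    exact hg0 (ext_homog (ℳ := ℳ) fun e x hx => h e x hx)
  obtain ⟨e, x, hx, hgx⟩ := hex
  have h1 : g x ∈ AZ 𝒜 (d + e) := hg e x hx
  refine ⟨e, ?_, ?_⟩
  · intro hb
    have : x = 0 := (Submodule.eq_bot_iff _).mp hb _ hx
    exact hgx (by rw [this, map_zero])
  · by_contra hneg
    rw [AZ, if_neg hneg] at h1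
    exact hgx ((Submodule.mem_bot k).mp h1)

end Stmt5

namespace Stmt5

variable {k S : Type*} [Field k] [CommRing S] [Algebra k S]
variable {𝒜 : ℕ → Submodule k S} [GradedAlgebra 𝒜]

lemma supp_finite {M : Type*} [AddCommGroup M] [Module k M] (ℳ : ℤ → Submodule k M)
    [DirectSum.Decomposition ℳ] [FiniteDimensional k M] : {n : ℤ | ℳ n ≠ ⊥}.Finite :=
  WellFoundedGT.finite_ne_bot_of_iSupIndep
    ((DirectSum.Decomposition.isInternal ℳ).submodule_iSupIndep)

lemma map_pid {M₀ : Type*} [AddCommGroup M₀] [Module S M₀] (h : M₀ →ₗ[S] S)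
    {z : M₀} (hz : z ∈ (pid 𝒜) • (⊤ : Submodule S M₀)) : h z ∈ pid 𝒜 := by
  refine Submodule.smul_induction_on hz (fun s hs y _ => ?_) (fun a b ha hb => ?_)
  · rw [map_smul, smul_eq_mul]
    exact Ideal.mul_mem_right _ _ hs
  · rw [map_add]
    exact Ideal.add_mem _ ha hb

section Steps

variable {M₀ M₁ M₂ : Type*}
  [AddCommGroup M₀] [Module S M₀] [Module k M₀] [IsScalarTower k S M₀]
  [AddCommGroup M₁] [Module S M₁] [Module k M₁] [IsScalarTower k S M₁]
  [AddCommGroup M₂] [Module S M₂] [Module k M₂] [IsScalarTower k S M₂]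

lemma stepUp
    {ℳ₀ : ℤ → Submodule k M₀} [DirectSum.Decomposition ℳ₀]
    {ℳ₁ : ℤ → Submodule k M₁} [DirectSum.Decomposition ℳ₁]
    (hsm0 : Compat 𝒜 ℳ₀) (hsm1 : Compat 𝒜 ℳ₁)
    (f₁ : M₁ →ₗ[S] M₀) (f₂ : M₂ →ₗ[S] M₁)
    (hhom₁ : ∀ (n : ℤ) (x : M₁), x ∈ ℳ₁ n → f₁ x ∈ ℳ₀ n)
    (hmin₁ : ∀ x : M₁, f₁ x ∈ (pid 𝒜) • (⊤ : Submodule S M₀))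
    (hmin₂ : ∀ x : M₂, f₂ x ∈ (pid 𝒜) • (⊤ : Submodule S M₁))
    (hex : LinearMap.ker f₁ = LinearMap.range f₂)
    (hfin : {n : ℤ | ℳ₁ n ≠ ⊥}.Finite)
    {n : ℤ} (hlow0 : ∀ m ≤ n, ℳ₀ m = ⊥) :
    ∀ m ≤ n + 1, ℳ₁ m = ⊥ := by
  have key : ∀ m, m ≤ n + 1 → (∀ m' < m, ℳ₁ m' = ⊥) → ℳ₁ m = ⊥ := by
    intro m hm hlow1
    rw [Submodule.eq_bot_iff]
    intro x hx
    have h1 : f₁ x = 0 := by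
      by_cases hmn : m ≤ n
      · exact (Submodule.eq_bot_iff _).mp (hlow0 m hmn) _ (hhom₁ m x hx)
      · have hm' : m = n + 1 := by omega
        subst hm'
        have hl := low (n := n + 1) hsm0 (fun m' hm' => hlow0 m' (by omega)) (hmin₁ x)
        rwa [decompose_of_mem_same ℳ₀ (hhom₁ _ x hx)] at hl
    have h2 : x ∈ LinearMap.range f₂ := hex ▸ LinearMap.mem_ker.mpr h1
    obtain ⟨y, rfl⟩ := h2
    have h3 := low hsm1 (fun m' hm' => hlow1 m' hm') (hmin₂ y)
    rwa [decompose_of_mem_same ℳ₁ hx] at h3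
  by_contra hcon
  push_neg at hcon
  obtain ⟨m₀, hm₀, hne⟩ := hcon
  set A : Set ℤ := {m | m ≤ n + 1 ∧ ℳ₁ m ≠ ⊥} with hA
  have hAfin : A.Finite := hfin.subset fun m hm => hm.2
  have hAne : hAfin.toFinset.Nonempty := by
    rw [Set.Finite.toFinset_nonempty]
    exact ⟨m₀, hm₀, hne⟩
  set m := hAfin.toFinset.min' hAne with hmdef
  have hmA : m ∈ A := hAfin.mem_toFinset.mp (hAfin.toFinset.min'_mem hAne)
  refine hmA.2 (key m hmA.1 fun m' hm' => ?_)
  by_contra h'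
  have hm'A : m' ∈ A := ⟨(hm'.trans_le hmA.1).le, h'⟩
  have := hAfin.toFinset.min'_le m' (hAfin.mem_toFinset.mpr hm'A)
  omega

lemma stepDown
    {ℳ₁ : ℤ → Submodule k M₁} [DirectSum.Decomposition ℳ₁]
    {ℳ₂ : ℤ → Submodule k M₂} [DirectSum.Decomposition ℳ₂]
    [Module.Free S M₁] [Module.Finite S M₁] [Module.Free S M₂] [Module.Finite S M₂]
    (hsm1 : Compat 𝒜 ℳ₁) (hsm2 : Compat 𝒜 ℳ₂)
    (f₁ : M₁ →ₗ[S] M₀) (f₂ : M₂ →ₗ[S] M₁)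
    (hhom₂ : ∀ (n : ℤ) (x : M₂), x ∈ ℳ₂ n → f₂ x ∈ ℳ₁ n)
    (hmin₁ : ∀ x : M₁, f₁ x ∈ (pid 𝒜) • (⊤ : Submodule S M₀))
    (hmin₂ : ∀ x : M₂, f₂ x ∈ (pid 𝒜) • (⊤ : Submodule S M₁))
    (hdual : ∀ g : M₁ →ₗ[S] S, g ∘ₗ f₂ = 0 ↔ ∃ h : M₀ →ₗ[S] S, g = h ∘ₗ f₁)
    (hfin1 : {n : ℤ | ℳ₁ n ≠ ⊥}.Finite)
    {d : ℤ} (hQ2 : ∀ d' ≤ d, ∀ g : M₂ →ₗ[S] S, IsHomog 𝒜 ℳ₂ g d' → g = 0) :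
    ∀ d' ≤ d + 1, ∀ g : M₁ →ₗ[S] S, IsHomog 𝒜 ℳ₁ g d' → g = 0 := by
  by_contra hcon
  push_neg at hcon
  obtain ⟨d₁, hd₁, g₁, hg₁h, hg₁0⟩ := hcon
  set P : ℤ → Prop := fun d' => d' ≤ d + 1 ∧ ∃ g : M₁ →ₗ[S] S, IsHomog 𝒜 ℳ₁ g d' ∧ g ≠ 0
    with hP
  have hbdd : ∃ b : ℤ, ∀ z, P z → b ≤ z := by
    by_cases hne : {n : ℤ | ℳ₁ n ≠ ⊥}.Nonempty
    · have hne' : hfin1.toFinset.Nonempty := by rwa [Set.Finite.toFinset_nonempty]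
      refine ⟨-(hfin1.toFinset.max' hne'), fun z hz => ?_⟩
      obtain ⟨_, g, hg, hg0⟩ := hz
      obtain ⟨e, he, hle⟩ := homog_lb hg hg0
      have := hfin1.toFinset.le_max' e (hfin1.mem_toFinset.mpr he)
      omega
    · refine ⟨0, fun z hz => ?_⟩
      exfalso
      obtain ⟨_, g, hg, hg0⟩ := hz
      obtain ⟨e, he, _⟩ := homog_lb hg hg0
      exact hne ⟨e, he⟩
  obtain ⟨d₀, ⟨hd₀le, g, hg, hg0⟩, hleast⟩ :=
    Int.exists_least_of_bdd hbdd ⟨d₁, hd₁, g₁, hg₁h, hg₁0⟩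
  have hψhom : IsHomog 𝒜 ℳ₂ (g ∘ₗ f₂) d₀ := fun e x hx => hg e _ (hhom₂ e x hx)
  have hψI : ∀ x, (g ∘ₗ f₂) x ∈ pid 𝒜 := fun x => map_pid g (hmin₂ x)
  have hψ0 : g ∘ₗ f₂ = 0 :=
    lowDual hsm2 (fun d'' hd'' g'' hg'' => hQ2 d'' (by omega) g'' hg'')
      (mem_smul_of_values _ hψI) hψhom
  obtain ⟨h, hgh⟩ := (hdual g).mp hψ0
  have hgI : ∀ x, g x ∈ pid 𝒜 := by
    intro x
    rw [hgh]
    exact map_pid h (hmin₁ x)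
  refine hg0 (lowDual hsm1 (fun d'' hd'' g'' hg'' => ?_) (mem_smul_of_values _ hgI) hg)
  by_contra hne0
  have := hleast d'' ⟨by omega, g'', hg'', hne0⟩
  omega

end Steps

end Stmt5

namespace Stmt5

variable {k S : Type*} [Field k] [CommRing S] [Algebra k S]
variable {𝒜 : ℕ → Submodule k S} [GradedAlgebra 𝒜]

lemma findimS (h0 : 𝒜 0 = (1 : Submodule k S)) (hgen : ∀ i : ℕ, 𝒜 1 * 𝒜 i = 𝒜 (i + 1))
    (hfin : FiniteDimensional k (𝒜 1)) (hart : ∃ N : ℕ, ∀ i : ℕ, N ≤ i → 𝒜 i = ⊥) :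
    FiniteDimensional k S := by
  have hfg1 : (𝒜 1).FG := (Submodule.fg_iff_finiteDimensional _).mpr hfin
  have hFG : ∀ i : ℕ, (𝒜 i).FG := by
    intro i
    induction i with
    | zero =>
      rw [h0, Submodule.one_eq_span]
      exact Submodule.fg_span_singleton _
    | succ i ih =>
      rw [← hgen i]
      exact Submodule.FG.mul hfg1 ih
  obtain ⟨N₀, hN₀⟩ := hart
  have htop : (⊤ : Submodule k S) = (Finset.range (N₀ + 1)).sup 𝒜 := by
    refine le_antisymm ?_ le_top
    rw [← (DirectSum.Decomposition.isInternal 𝒜).submodule_iSup_eq_top]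
    refine iSup_le fun i => ?_
    by_cases hi : i ≤ N₀
    · exact Finset.le_sup (Finset.mem_range.mpr (by omega))
    · rw [hN₀ i (by omega)]
      exact bot_le
  have hfgtop : (⊤ : Submodule k S).FG := by
    rw [htop]
    exact Finset.sup_induction Submodule.fg_bot (fun a ha b hb => Submodule.FG.sup ha hb)
      (fun i _ => hFG i)
  exact Module.finite_def.mpr hfgtop

lemma exists_preimage_homog {M₁ M₂ : Type*}
    [AddCommGroup M₁] [Module S M₁] [Module k M₁]
    [AddCommGroup M₂] [Module S M₂] [Module k M₂]
    {ℳ₁ : ℤ → Submodule k M₁} [DirectSum.Decomposition ℳ₁]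
    {ℳ₂ : ℤ → Submodule k M₂} [DirectSum.Decomposition ℳ₂]
    {f₂ : M₂ →ₗ[S] M₁} (hhom₂ : ∀ (n : ℤ) (x : M₂), x ∈ ℳ₂ n → f₂ x ∈ ℳ₁ n)
    {N : ℤ} {x : M₁} (hxN : x ∈ ℳ₁ N) (hx : x ∈ LinearMap.range f₂) :
    ∃ y, y ∈ ℳ₂ N ∧ f₂ y = x := by
  classical
  obtain ⟨y', hy'⟩ := hx
  refine ⟨(decompose ℳ₂ y' N : M₂), (decompose ℳ₂ y' N).2, ?_⟩
  have h1 : x = (decompose ℳ₁ x N : M₁) := (decompose_of_mem_same ℳ₁ hxN).symm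
  rw [h1, ← hy']
  have h2 : (decompose ℳ₁ (f₂ y') N : M₁) = f₂ (decompose ℳ₂ y' N : M₂) := by
    conv_lhs => rw [← DirectSum.sum_support_decompose ℳ₂ y']
    rw [map_sum, DirectSum.decompose_sum, DFinsupp.finset_sum_apply,
      AddSubmonoidClass.coe_finset_sum]
    by_cases hN : N ∈ (decompose ℳ₂ y').support
    · rw [Finset.sum_eq_single_of_mem N hN (fun e _ hne =>
        decompose_of_mem_ne ℳ₁ (hhom₂ e _ (decompose ℳ₂ y' e).2) hne)]
      rw [decompose_of_mem_same ℳ₁ (hhom₂ N _ (decompose ℳ₂ y' N).2)]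
    · have h0 : (decompose ℳ₂ y' N : M₂) = 0 := by
        have := DFinsupp.notMem_support_iff.mp hN
        rw [this]
        rfl
      rw [h0, map_zero]
      refine Finset.sum_eq_zero fun e he => ?_
      exact decompose_of_mem_ne ℳ₁ (hhom₂ e _ (decompose ℳ₂ y' e).2) (fun h => hN (h ▸ he))
  rw [h2]

end Stmt5


/-- **Observation (additivity of dimension along a totally acyclic complex).**
Let `S` be a standard graded Artinian algebra over a field `k` and let
`(F_j, f_j)` be a minimal homogeneous totally acyclic complex of finitely generated
graded free `S`-modules.  Then for every degree `N`, only finitely many of the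
components `[F_j]_N` are nonzero, and the alternating sum of their dimensions is `0`. -/
theorem stmt_5 {k S : Type*} [Field k] [CommRing S] [Algebra k S]
    (𝒜 : ℕ → Submodule k S) [GradedAlgebra 𝒜]
    -- standard graded Artinian
    (h0 : 𝒜 0 = (1 : Submodule k S))
    (hgen : ∀ i : ℕ, 𝒜 1 * 𝒜 i = 𝒜 (i + 1))
    (hfin : FiniteDimensional k (𝒜 1))
    (hart : ∃ N : ℕ, ∀ i : ℕ, N ≤ i → 𝒜 i = ⊥)
    -- the complex of finitely generated graded free modules
    (F : ℤ → Type*) [∀ j, AddCommGroup (F j)] [∀ j, Module S (F j)]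
    [∀ j, Module k (F j)] [∀ j, IsScalarTower k S (F j)]
    [∀ j, Module.Free S (F j)] [∀ j, Module.Finite S (F j)]
    (ℱ : (j : ℤ) → ℤ → Submodule k (F j))
    [∀ j, DirectSum.Decomposition (ℱ j)]
    (hsmul : ∀ (j : ℤ) (i : ℕ) (n : ℤ) (s : S) (x : F j),
      s ∈ 𝒜 i → x ∈ ℱ j n → s • x ∈ ℱ j (n + i))
    -- differentials `f j : F (j+1) → F j`
    (f : (j : ℤ) → F (j + 1) →ₗ[S] F j)
    (hcx : ∀ (j : ℤ) (x : F (j + 1 + 1)), f j (f (j + 1) x) = 0)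
    -- homogeneous of degree 0
    (hhom : ∀ (j n : ℤ) (x : F (j + 1)), x ∈ ℱ (j + 1) n → f j x ∈ ℱ j n)
    -- minimal: the image lies in `S₊ · F_j`
    (hmin : ∀ (j : ℤ) (x : F (j + 1)),
      f j x ∈ (Ideal.span (⋃ i : ℕ, ⋃ _ : 1 ≤ i, ((𝒜 i : Set S)))) • (⊤ : Submodule S (F j)))
    -- exactness
    (hexact : ∀ j : ℤ, LinearMap.ker (f j) = LinearMap.range (f (j + 1)))
    -- exactness of the dual complex `Hom_S(−, S)`
    (hdualexact : ∀ (j : ℤ) (g : F (j + 1) →ₗ[S] S),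
      g ∘ₗ f (j + 1) = 0 ↔ ∃ h : F j →ₗ[S] S, g = h ∘ₗ f j) :
    ∀ N : ℤ, {j : ℤ | ℱ j N ≠ ⊥}.Finite ∧
      ∀ J : Finset ℤ, (∀ j ∉ J, ℱ j N = ⊥) →
        ∑ j ∈ J, ((Int.negOnePow j : ℤ) * (Module.finrank k (ℱ j N) : ℤ)) = 0 := by
  classical
  haveI hSfin : FiniteDimensional k S := Stmt5.findimS h0 hgen hfin hart
  haveI hFfin : ∀ j, FiniteDimensional k (F j) := fun j => Module.Finite.trans S (F j)
  obtain ⟨N₀, hN₀⟩ := hart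
  have hsm : ∀ j, Stmt5.Compat 𝒜 (ℱ j) := fun j i n s x hs hx => hsmul j i n s x hs hx
  have hsupfin : ∀ j, {n : ℤ | ℱ j n ≠ ⊥}.Finite := fun j => Stmt5.supp_finite (ℱ j)
  intro N
  -- upper tail
  have hup : ∃ B : ℤ, ∀ j, B ≤ j → ℱ j N = ⊥ := by
    obtain ⟨nstar, hbase⟩ : ∃ n0 : ℤ, ∀ m ≤ n0, ℱ 0 m = ⊥ := by
      by_cases hne : {n : ℤ | ℱ 0 n ≠ ⊥}.Nonempty
      · have hne' : (hsupfin 0).toFinset.Nonempty := by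
          rwa [Set.Finite.toFinset_nonempty]
        refine ⟨(hsupfin 0).toFinset.min' hne' - 1, fun m hm => ?_⟩
        by_contra h'
        have := Finset.min'_le _ m ((hsupfin 0).mem_toFinset.mpr h')
        omega
      · exact ⟨0, fun m _ => by
          by_contra h'
          exact hne ⟨m, h'⟩⟩
    have hind : ∀ t : ℕ, ∀ m ≤ nstar + (t : ℤ), ℱ (t : ℤ) m = ⊥ := by
      intro t
      induction t with
      | zero => simpa using hbase
      | succ t ih =>
        have hstep := Stmt5.stepUp (hsm (t : ℤ)) (hsm ((t : ℤ) + 1))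
          (f (t : ℤ)) (f ((t : ℤ) + 1)) (hhom (t : ℤ)) (hmin (t : ℤ)) (hmin ((t : ℤ) + 1))
          (hexact (t : ℤ)) (hsupfin ((t : ℤ) + 1)) ih
        rw [show ((t + 1 : ℕ) : ℤ) = (t : ℤ) + 1 by push_cast; ring]
        intro m hm
        exact hstep m (by push_cast at hm ⊢; omega)
    refine ⟨max 0 (N - nstar), fun j hj => ?_⟩
    have hj0 : 0 ≤ j := le_trans (le_max_left _ _) hj
    have hcast : ((j.toNat : ℕ) : ℤ) = j := Int.toNat_of_nonneg hj0
    have := hind j.toNat N (by omega)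
    rwa [hcast] at this
  -- lower tail
  have hdn : ∃ B : ℤ, ∀ j, j ≤ B → ℱ j N = ⊥ := by
    obtain ⟨dstar, hQbase⟩ : ∃ d0 : ℤ, ∀ d' ≤ d0, ∀ g : F 1 →ₗ[S] S,
        Stmt5.IsHomog 𝒜 (ℱ 1) g d' → g = 0 := by
      by_cases hne : {n : ℤ | ℱ 1 n ≠ ⊥}.Nonempty
      · have hne' : (hsupfin 1).toFinset.Nonempty := by
          rwa [Set.Finite.toFinset_nonempty]
        refine ⟨-((hsupfin 1).toFinset.max' hne') - 1, fun d' hd' g hg => ?_⟩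
        by_contra hg0
        obtain ⟨e, he, hle⟩ := Stmt5.homog_lb hg hg0
        have := Finset.le_max' _ e ((hsupfin 1).mem_toFinset.mpr he)
        omega
      · refine ⟨0, fun d' _ g hg => ?_⟩
        by_contra hg0
        obtain ⟨e, he, _⟩ := Stmt5.homog_lb hg hg0
        exact hne ⟨e, he⟩
    have hdind : ∀ t : ℕ, ∀ d' ≤ dstar + (t : ℤ), ∀ g : F (1 - (t : ℤ)) →ₗ[S] S,
        Stmt5.IsHomog 𝒜 (ℱ (1 - (t : ℤ))) g d' → g = 0 := by
      intro t
      induction t with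
      | zero => simpa using hQbase
      | succ t ih =>
        have ih' : ∀ d' ≤ dstar + (t : ℤ), ∀ g : F ((-1 - (t : ℤ)) + 1 + 1) →ₗ[S] S,
            Stmt5.IsHomog 𝒜 (ℱ ((-1 - (t : ℤ)) + 1 + 1)) g d' → g = 0 := by
          rw [show (-1 - (t : ℤ)) + 1 + 1 = 1 - (t : ℤ) by ring]
          exact ih
        have hstep := Stmt5.stepDown (hsm ((-1 - (t : ℤ)) + 1)) (hsm ((-1 - (t : ℤ)) + 1 + 1))
          (f (-1 - (t : ℤ))) (f ((-1 - (t : ℤ)) + 1)) (hhom ((-1 - (t : ℤ)) + 1))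
          (hmin (-1 - (t : ℤ))) (hmin ((-1 - (t : ℤ)) + 1)) (hdualexact (-1 - (t : ℤ)))
          (hsupfin ((-1 - (t : ℤ)) + 1)) ih'
        rw [show (1 : ℤ) - ((t + 1 : ℕ) : ℤ) = (-1 - (t : ℤ)) + 1 by push_cast; ring]
        intro d' hd'
        exact hstep d' (by push_cast at hd' ⊢; omega)
    refine ⟨min 1 (dstar + N + 1 - N₀), fun j hj => ?_⟩
    by_contra hbot
    obtain ⟨x, hxmem, hx0⟩ := Submodule.ne_bot_iff _ |>.mp hbot
    obtain ⟨d, g, hgh, hgx, hdN⟩ := Stmt5.exists_homog_ne (hsm j) hxmem hx0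
    have hj1 : j ≤ 1 := le_trans hj (min_le_left _ _)
    have hcast : ((1 - j).toNat : ℤ) = 1 - j := Int.toNat_of_nonneg (by omega)
    -- upper bound on d from Artinian property
    have hdup : d + N < N₀ := by
      by_contra hge
      have hAZ : Stmt5.AZ 𝒜 (d + N) = ⊥ := by
        rw [Stmt5.AZ, if_pos (by omega), hN₀ _ (by omega)]
      have := hgh N x hxmem
      rw [hAZ] at this
      exact hgx ((Submodule.mem_bot k).mp this)
    -- lower bound on d from the inductive vanishing
    have hdlow : ¬ d ≤ dstar + ((1 - j).toNat : ℤ) := by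
      intro hle
      have := hdind (1 - j).toNat d hle
      rw [hcast, show (1 : ℤ) - (1 - j) = j by ring] at this
      exact hgx (by rw [this g hgh]; rfl)
    have hjle : j ≤ dstar + N + 1 - N₀ := le_trans hj (min_le_right _ _)
    omega
  obtain ⟨Bp, hBp⟩ := hup
  obtain ⟨Bm, hBm⟩ := hdn
  constructor
  · refine Set.Finite.subset (Set.finite_Icc (Bm + 1) Bp) fun j hj => ?_
    simp only [Set.mem_setOf_eq] at hj
    simp only [Set.mem_Icc]
    constructor
    · by_contra h'
      exact hj (hBm j (by omega))
    · by_contra h'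
      exact hj (hBp j (by omega))
  · intro J hJ
    haveI : ∀ j n, FiniteDimensional k (ℱ j n) := fun j n =>
      FiniteDimensional.finiteDimensional_submodule _
    set phi : ∀ j : ℤ, (ℱ (j + 1) N) →ₗ[k] (ℱ j N) := fun j =>
      ((f j).restrictScalars k).restrict (fun x hx => hhom j N x hx) with hphi
    set rk : ℤ → ℕ := fun j => Module.finrank k (LinearMap.range (phi j)) with hrk
    have hrkdef : ∀ j : ℤ, rk j = Module.finrank k (LinearMap.range (phi j)) := fun _ => rfl
    have hphiapp : ∀ (j : ℤ) (x : ℱ (j + 1) N), ((phi j x : F j)) = f j (x : F (j + 1)) :=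
      fun j x => rfl
    have hker : ∀ j : ℤ, LinearMap.ker (phi j) = LinearMap.range (phi (j + 1)) := by
      intro j
      ext x
      simp only [LinearMap.mem_ker, LinearMap.mem_range]
      constructor
      · intro hx0
        have hfx : f j (x : F (j + 1)) = 0 := by
          rw [← hphiapp j x, hx0]
          rfl
        have hxr : (x : F (j + 1)) ∈ LinearMap.range (f (j + 1)) :=
          (hexact j) ▸ LinearMap.mem_ker.mpr hfx
        obtain ⟨y, hy, hfy⟩ := Stmt5.exists_preimage_homog (hhom (j + 1)) x.2 hxr
        exact ⟨⟨y, hy⟩, Subtype.ext (by rw [hphiapp]; exact hfy)⟩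
      · rintro ⟨y, rfl⟩
        apply Subtype.ext
        rw [hphiapp, hphiapp]
        exact hcx j (y : F (j + 1 + 1))
    have hrank : ∀ j : ℤ, (Module.finrank k (ℱ (j + 1) N) : ℤ) = (rk (j + 1) : ℤ) + rk j := by
      intro j
      have h1 := LinearMap.finrank_range_add_finrank_ker (phi j)
      rw [hker j] at h1
      rw [hrkdef, hrkdef]
      push_cast
      omega
    have hrk0 : ∀ j : ℤ, ℱ (j + 1) N = ⊥ → rk j = 0 := by
      intro j hbot
      have hphi0 : phi j = 0 := by
        ext x
        have h00 : (x : F (j + 1)) = 0 := (Submodule.eq_bot_iff _).mp hbot _ x.2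
        have hx0 : x = 0 := Subtype.ext h00
        rw [hx0, map_zero, map_zero]
      rw [hrkdef, hphi0, LinearMap.range_zero]
      exact finrank_bot k _
    have hrk0' : ∀ j : ℤ, ℱ j N = ⊥ → rk j = 0 := by
      intro j hbot
      have h1 : Module.finrank k (ℱ j N) = 0 := by
        rw [hbot]
        exact finrank_bot k _
      have h2 := Submodule.finrank_le (LinearMap.range (phi j))
      rw [h1] at h2
      rw [hrkdef]
      omega
    have hsum1 : ∑ j ∈ J, ((Int.negOnePow j : ℤ) * (Module.finrank k (ℱ j N) : ℤ))
        = ∑ j ∈ J, ((Int.negOnePow j : ℤ) * ((rk j : ℤ) + (rk (j - 1) : ℤ))) := by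
      refine Finset.sum_congr rfl fun j _ => ?_
      obtain ⟨i, rfl⟩ : ∃ i, j = i + 1 := ⟨j - 1, by ring⟩
      rw [hrank i, show i + 1 - 1 = i by ring]
    rw [hsum1]
    have hsplit : ∑ j ∈ J, ((Int.negOnePow j : ℤ) * ((rk j : ℤ) + (rk (j - 1) : ℤ)))
        = (∑ j ∈ J, (Int.negOnePow j : ℤ) * (rk j : ℤ))
          + ∑ j ∈ J, (Int.negOnePow j : ℤ) * (rk (j - 1) : ℤ) := by
      rw [← Finset.sum_add_distrib]
      exact Finset.sum_congr rfl fun j _ => by ring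
    rw [hsplit]
    set emb : ℤ ↪ ℤ := ⟨fun x => x - 1, fun a b h => by simp only at h; omega⟩ with hemb
    set J' : Finset ℤ := J.map emb with hJ'
    have hmemJ' : ∀ j : ℤ, j ∈ J' ↔ j + 1 ∈ J := by
      intro j
      rw [hJ', Finset.mem_map]
      constructor
      · rintro ⟨a, ha, rfl⟩
        show a - 1 + 1 ∈ J
        simpa using ha
      · intro h
        exact ⟨j + 1, h, show j + 1 - 1 = j by ring⟩
    have h2 : ∑ j ∈ J, (Int.negOnePow j : ℤ) * (rk (j - 1) : ℤ)
        = - ∑ i ∈ J', (Int.negOnePow i : ℤ) * (rk i : ℤ) := by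
      rw [hJ', Finset.sum_map, ← Finset.sum_neg_distrib]
      refine Finset.sum_congr rfl fun j _ => ?_
      have : (Int.negOnePow j : ℤ) = -(Int.negOnePow (j - 1) : ℤ) := by
        rw [show j = (j - 1) + 1 by ring, Int.negOnePow_succ]
        push_cast
        ring
      rw [this]
      simp only [hemb, Function.Embedding.coeFn_mk]
      change _ = -((Int.negOnePow (j - 1) : ℤ) * (rk (j - 1) : ℤ))
      ring
    rw [h2]
    have hJsub : ∑ j ∈ J ∩ J', (Int.negOnePow j : ℤ) * (rk j : ℤ)
        = ∑ j ∈ J, (Int.negOnePow j : ℤ) * (rk j : ℤ) := by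
      refine Finset.sum_subset (Finset.inter_subset_left) fun j hj hnot => ?_
      have hj' : j ∉ J' := fun h => hnot (Finset.mem_inter.mpr ⟨hj, h⟩)
      have hj1 : j + 1 ∉ J := fun h => hj' ((hmemJ' j).mpr h)
      rw [hrk0 j (hJ _ hj1)]
      simp
    have hJ'sub : ∑ j ∈ J ∩ J', (Int.negOnePow j : ℤ) * (rk j : ℤ)
        = ∑ j ∈ J', (Int.negOnePow j : ℤ) * (rk j : ℤ) := by
      refine Finset.sum_subset (Finset.inter_subset_right) fun j hj hnot => ?_
      have hjJ : j ∉ J := fun h => hnot (Finset.mem_inter.mpr ⟨h, hj⟩)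
      rw [hrk0' j (hJ _ hjJ)]
      simp
    rw [← hJsub, ← hJ'sub]
    ring
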